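/- Let X : ℝⁿ → ℝⁿ be a C¹ vector field, f(x) = ½‖X(x)‖², F(x) = DX(x) − (DX(x))ᵀ, and define H : ℝⁿ × ℝⁿ → ℝ by H(x, y) = ½‖y‖² − f(x). Define the 2-form Ω₂ on ℝⁿ × ℝⁿ at the point (x, y) by Ω₂((u₁, v₁), (u₂, v₂)) = ⟨F(x) u₁, u₂⟩ + ⟨u₁, v₂⟩ − ⟨u₂, v₁⟩. Then Ω₂ is a nondegenerate antisymmetric bilinear form at each point, and the vector field V(x, y) = (y, ∇f(x) + F(x) y) is the Hamilton gradient of H with respect to Ω₂: for every (x, y) and every w = (w₁, w₂), Ω₂((V(x, y)), (w₁, w₂)) = dH(x, y)(w₁, w₂). Consequently the geometric dynamics x″ = ∇f(x) + F(x) x′ lifts to the Hamilton equations (x′, y′) = V(x, y) on the tangent bundle ℝⁿ × ℝⁿ. -/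

import Mathlib

open scoped RealInnerProductSpace

/-- With `H(x,y) = ½‖y‖² - f(x)` (`f = ½‖X‖²`), `F = DX - (DX)ᵀ`, and
the 2-form `Ω₂` at `(x,y)` given by
`Ω₂((u₁,v₁),(u₂,v₂)) = ⟪F(x)u₁, u₂⟫ + ⟪u₁, v₂⟫ - ⟪u₂, v₁⟫`,
the form `Ω₂` is antisymmetric and nondegenerate at every point, and
`V(x,y) = (y, ∇f(x) + F(x)y)` is the Hamilton gradient of `H` with respect to `Ω₂`.
Consequently the geometric dynamics `x'' = ∇f(x) + F(x)x'` lifts to the Hamilton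
equations `(x',y') = V(x,y)`. -/
theorem geometric_dynamics_hamiltonian_lift {n : ℕ}
    (X : EuclideanSpace ℝ (Fin n) → EuclideanSpace ℝ (Fin n))
    (hX : ContDiff ℝ 1 X)
    (f : EuclideanSpace ℝ (Fin n) → ℝ)
    (hf : ∀ x, f x = (1 / 2) * ‖X x‖ ^ 2)
    (F : EuclideanSpace ℝ (Fin n) →
      EuclideanSpace ℝ (Fin n) →L[ℝ] EuclideanSpace ℝ (Fin n))
    (hF : ∀ x, F x = fderiv ℝ X x - ContinuousLinearMap.adjoint (fderiv ℝ X x))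
    (H : EuclideanSpace ℝ (Fin n) × EuclideanSpace ℝ (Fin n) → ℝ)
    (hH : ∀ p, H p = (1 / 2) * ‖p.2‖ ^ 2 - f p.1)
    (Ω₂ : EuclideanSpace ℝ (Fin n) × EuclideanSpace ℝ (Fin n) →
      EuclideanSpace ℝ (Fin n) × EuclideanSpace ℝ (Fin n) →
      EuclideanSpace ℝ (Fin n) × EuclideanSpace ℝ (Fin n) → ℝ)
    (hΩ₂ : ∀ p u v, Ω₂ p u v = ⟪F p.1 u.1, v.1⟫ + ⟪u.1, v.2⟫ - ⟪v.1, u.2⟫)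
    (V : EuclideanSpace ℝ (Fin n) × EuclideanSpace ℝ (Fin n) →
      EuclideanSpace ℝ (Fin n) × EuclideanSpace ℝ (Fin n))
    (hV : ∀ p, V p = (p.2, gradient f p.1 + F p.1 p.2)) :
    (∀ p u v, Ω₂ p u v = -Ω₂ p v u) ∧
      (∀ p u, (∀ v, Ω₂ p u v = 0) → u = 0) ∧
      (∀ p w, Ω₂ p (V p) w = fderiv ℝ H p w) ∧
      ∀ (a b : ℝ) (c c' c'' : ℝ → EuclideanSpace ℝ (Fin n)),
        (∀ t ∈ Set.Ioo a b, HasDerivAt c (c' t) t) →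
        (∀ t ∈ Set.Ioo a b, HasDerivAt c' (c'' t) t) →
        ((∀ t ∈ Set.Ioo a b, c'' t = gradient f (c t) + F (c t) (c' t)) ↔
          ∀ t ∈ Set.Ioo a b,
            HasDerivAt (fun s => (c s, c' s)) (V (c t, c' t)) t) := by
  have hFanti : ∀ x (u v : EuclideanSpace ℝ (Fin n)),
      ⟪F x u, v⟫ = -⟪F x v, u⟫ := by
    intro x u v
    simp only [hF, ContinuousLinearMap.sub_apply, inner_sub_left,
      ContinuousLinearMap.adjoint_inner_left]
    rw [real_inner_comm u (fderiv ℝ X x v), real_inner_comm v (fderiv ℝ X x u)]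
    ring
  have hdX : Differentiable ℝ X := hX.differentiable one_ne_zero
  have hdf : Differentiable ℝ f := by
    have hfe : f = fun x => (1 / 2 : ℝ) * ⟪X x, X x⟫ := by
      funext x; rw [hf, real_inner_self_eq_norm_sq]
    rw [hfe]
    exact (hdX.inner ℝ hdX).const_mul _
  refine ⟨?_, ?_, ?_, ?_⟩
  · intro p u v
    simp only [hΩ₂]
    rw [hFanti p.1 u.1 v.1]
    ring
  · intro p u hu
    have h1 : u.1 = 0 := by
      have := hu (0, u.1)
      simp only [hΩ₂, inner_zero_left, inner_zero_right, real_inner_self_eq_norm_sq] at this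
      have : ‖u.1‖ = 0 := by nlinarith [norm_nonneg u.1]
      simpa using this
    have h2 : u.2 = 0 := by
      have := hu (-u.2, 0)
      simp only [hΩ₂, h1, map_zero, inner_zero_left, inner_zero_right,
        inner_neg_left, real_inner_self_eq_norm_sq] at this
      have : ‖u.2‖ = 0 := by nlinarith [norm_nonneg u.2]
      simpa using this
    exact Prod.ext h1 h2
  · intro p w
    -- compute fderiv H p
    have hfd : ∀ z, HasFDerivAt f
        ((InnerProductSpace.toDual ℝ _) (gradient f z)) z :=
      fun z => ((hdf z).hasGradientAt).hasFDerivAt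
    have hHg : ∀ q : EuclideanSpace ℝ (Fin n) × EuclideanSpace ℝ (Fin n),
        H q = (1 / 2 : ℝ) * ⟪q.2, q.2⟫ - f q.1 := by
      intro q; rw [hH, real_inner_self_eq_norm_sq]
    have hsnd : HasFDerivAt (fun q : EuclideanSpace ℝ (Fin n) × EuclideanSpace ℝ (Fin n) => q.2)
        (ContinuousLinearMap.snd ℝ _ _) p := hasFDerivAt_snd
    have hinner : HasFDerivAt
        (fun q : EuclideanSpace ℝ (Fin n) × EuclideanSpace ℝ (Fin n) => ⟪q.2, q.2⟫)
        ((fderivInnerCLM ℝ (p.2, p.2)).comp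
          ((ContinuousLinearMap.snd ℝ _ _).prod (ContinuousLinearMap.snd ℝ _ _))) p :=
      hsnd.inner ℝ hsnd
    have hfst : HasFDerivAt
        (fun q : EuclideanSpace ℝ (Fin n) × EuclideanSpace ℝ (Fin n) => f q.1)
        (((InnerProductSpace.toDual ℝ _) (gradient f p.1)).comp
          (ContinuousLinearMap.fst ℝ _ _)) p :=
      (hfd p.1).comp p hasFDerivAt_fst
    have hHd : HasFDerivAt H
        ((1 / 2 : ℝ) • ((fderivInnerCLM ℝ (p.2, p.2)).comp
          ((ContinuousLinearMap.snd ℝ _ _).prod (ContinuousLinearMap.snd ℝ _ _))) -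
         ((InnerProductSpace.toDual ℝ _) (gradient f p.1)).comp
          (ContinuousLinearMap.fst ℝ _ _)) p := by
      have := (hinner.const_smul (1 / 2 : ℝ)).sub hfst
      refine this.congr_of_eventuallyEq ?_
      filter_upwards with q
      rw [hHg q]; simp [smul_eq_mul]
    rw [hHd.fderiv]
    simp only [hΩ₂, hV, ContinuousLinearMap.sub_apply, ContinuousLinearMap.smul_apply,
      ContinuousLinearMap.comp_apply, ContinuousLinearMap.prod_apply,
      ContinuousLinearMap.coe_fst', ContinuousLinearMap.coe_snd',
      fderivInnerCLM_apply, InnerProductSpace.toDual_apply_apply, inner_add_right,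
      smul_eq_mul]
    rw [real_inner_comm w.1 (F p.1 p.2), real_inner_comm w.1 (gradient f p.1),
      real_inner_comm w.2 p.2]
    ring
  · intro a b c c' c'' hc hc'
    constructor
    · intro heq t ht
      have : HasDerivAt (fun s => (c s, c' s)) (c' t, c'' t) t :=
        HasDerivAt.prodMk (hc t ht) (hc' t ht)
      rw [hV]
      simpa [heq t ht] using this
    · intro hlift t ht
      have h2 : HasDerivAt c' (V (c t, c' t)).2 t := by
        have := ((ContinuousLinearMap.snd ℝ (EuclideanSpace ℝ (Fin n))
          (EuclideanSpace ℝ (Fin n))).hasFDerivAt.comp_hasDerivAt t (hlift t ht))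
        exact this
      have := (hc' t ht).unique h2
      rw [this, hV]
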